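/- Let E be a nonempty finite-dimensional smooth manifold (Hausdorff, second countable, without boundary) and let h be a homogeneity structure on E such that h(0, v) = e₀ for all v ∈ E, for some fixed point e₀ ∈ E. Assume h is regular, i.e. for every v ∈ E the derivative at t = 0 of the smooth curve t ↦ h(t, v) (a vector in the tangent space to E at e₀) vanishes if and only if v = e₀. Then there exist n ∈ ℕ and a diffeomorphism Φ : E → ℝⁿ such that Φ(h(t, v)) = t • Φ(v) for all t ∈ ℝ and v ∈ E; in other words, h comes from a real vector space structure on E. -/

import Mathlib

open Manifold Set Function Filter Topology

noncomputable section GRaux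

variable (d : ℕ) {E : Type*} [TopologicalSpace E]
    [ChartedSpace (EuclideanSpace ℝ (Fin d)) E]
    [IsManifold (𝓡 d) (⊤ : ℕ∞) E]

/-- The candidate linearizing map. -/
def GRphi (h : ℝ × E → E) (v : E) : EuclideanSpace ℝ (Fin d) :=
  (mfderiv 𝓘(ℝ, ℝ) (𝓡 d) (fun t : ℝ => h (t, v)) 0) (1 : ℝ)

theorem GRcurve_smooth {h : ℝ × E → E}
    (hsmooth : ContMDiff (𝓘(ℝ, ℝ).prod (𝓡 d)) (𝓡 d) (⊤ : ℕ∞) h) (v : E) :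
    ContMDiff 𝓘(ℝ, ℝ) (𝓡 d) (⊤ : ℕ∞) (fun t : ℝ => h (t, v)) := by
  have : ContMDiff 𝓘(ℝ, ℝ) (𝓘(ℝ, ℝ).prod (𝓡 d)) (⊤ : ℕ∞) (fun t : ℝ => (t, v)) :=
    contMDiff_id.prodMk contMDiff_const
  exact hsmooth.comp this

theorem GRequivariant {h : ℝ × E → E}
    (hsmooth : ContMDiff (𝓘(ℝ, ℝ).prod (𝓡 d)) (𝓡 d) (⊤ : ℕ∞) h)
    (hmul : ∀ (t s : ℝ) (v : E), h (t, h (s, v)) = h (t * s, v))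
    (s : ℝ) (v : E) : GRphi d h (h (s, v)) = s • GRphi d h v := by
  have hc : ∀ w : E, ContMDiff 𝓘(ℝ, ℝ) (𝓡 d) (⊤ : ℕ∞) (fun t : ℝ => h (t, w)) :=
    GRcurve_smooth d hsmooth
  have h1 : (fun t : ℝ => h (t, h (s, v))) = (fun t : ℝ => h (t, v)) ∘ (fun t : ℝ => t * s) := by
    funext t; simp [hmul, Function.comp]
  have hd : MDifferentiableAt 𝓘(ℝ, ℝ) 𝓘(ℝ, ℝ) (fun t : ℝ => t * s) 0 := by
    have : ContMDiff 𝓘(ℝ, ℝ) 𝓘(ℝ, ℝ) (⊤ : ℕ∞) (fun t : ℝ => t * s) :=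
      (contMDiff_id.smul contMDiff_const : ContMDiff 𝓘(ℝ,ℝ) 𝓘(ℝ,ℝ) (⊤ : ℕ∞) (fun t : ℝ => t • s))
    exact this.mdifferentiableAt (by simp)
  have h2 : (mfderiv 𝓘(ℝ, ℝ) 𝓘(ℝ, ℝ) (fun t : ℝ => t * s) 0) (1 : ℝ) = s • (1 : ℝ) := by
    have hdv : HasDerivAt (fun t : ℝ => t * s) s 0 := by
      simpa using (hasDerivAt_id (0 : ℝ)).mul_const s
    rw [mfderiv_eq_fderiv]
    show (fderiv ℝ (fun t : ℝ => t * s) 0) (1 : ℝ) = s • (1 : ℝ)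
    rw [fderiv_apply_one_eq_deriv, hdv.deriv]; simp
  unfold GRphi
  rw [h1, mfderiv_comp (I' := 𝓘(ℝ, ℝ)) 0
    ((hc v).mdifferentiableAt (by simp)) hd, zero_mul]
  show (mfderiv 𝓘(ℝ, ℝ) (𝓡 d) (fun t : ℝ => h (t, v)) 0)
      ((mfderiv 𝓘(ℝ, ℝ) 𝓘(ℝ, ℝ) (fun t : ℝ => t * s) 0) (1 : ℝ))
    = s • (mfderiv 𝓘(ℝ, ℝ) (𝓡 d) (fun t : ℝ => h (t, v)) 0) (1 : ℝ)
  rw [h2]; exact ContinuousLinearMap.map_smul _ _ _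

theorem GRphi_smooth {h : ℝ × E → E} (e₀ : E)
    (hsmooth : ContMDiff (𝓘(ℝ, ℝ).prod (𝓡 d)) (𝓡 d) (⊤ : ℕ∞) h)
    (hzero : ∀ v : E, h (0, v) = e₀) :
    ContMDiff (𝓡 d) (𝓡 d) (⊤ : ℕ∞) (GRphi d h) := by
  intro v₀
  have hf : ContMDiffAt ((𝓡 d).prod 𝓘(ℝ, ℝ)) (𝓡 d) (⊤ : ℕ∞)
      (Function.uncurry (fun (v : E) (t : ℝ) => h (t, v))) (v₀, (0 : ℝ)) := by
    have : Function.uncurry (fun (v : E) (t : ℝ) => h (t, v)) = h ∘ Prod.swap := rfl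
    rw [this]
    exact (hsmooth.comp (contMDiff_snd.prodMk contMDiff_fst)).contMDiffAt
  have hg : ContMDiffAt (𝓡 d) 𝓘(ℝ, ℝ) (⊤ : ℕ∞) (fun _ : E => (0 : ℝ)) v₀ := contMDiffAt_const
  have hmain := ContMDiffAt.mfderiv (fun (v : E) (t : ℝ) => h (t, v)) (fun _ : E => (0 : ℝ))
    hf hg (by exact_mod_cast (top_add (1:ℕ∞)).le)
  have key : ∀ x : E,
      (inTangentCoordinates 𝓘(ℝ, ℝ) (𝓡 d) (fun _ : E => (0 : ℝ))
        (fun v : E => h (0, v))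
        (fun v : E => mfderiv 𝓘(ℝ, ℝ) (𝓡 d) (fun t : ℝ => h (t, v)) 0) v₀ x) (1 : ℝ)
      = GRphi d h x := by
    intro x
    erw [inTangentCoordinates_eq]
    · simp only [ContinuousLinearMap.comp_apply, hzero]
      have h1 : (tangentBundleCore 𝓘(ℝ, ℝ) ℝ).coordChange (achart ℝ (0:ℝ))
          (achart ℝ (0 : ℝ)) (0 : ℝ) (1 : ℝ) = (1 : ℝ) :=
        (tangentBundleCore 𝓘(ℝ, ℝ) ℝ).coordChange_self (achart ℝ (0:ℝ)) (0:ℝ)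
          (mem_achart_source ℝ (0:ℝ)) (1 : ℝ)
      exact ((tangentBundleCore (𝓡 d) E).coordChange_self (achart _ e₀) e₀
        (mem_achart_source _ e₀) _).trans
        (congrArg (mfderiv 𝓘(ℝ, ℝ) (𝓡 d) (fun t : ℝ => h (t, x)) 0) h1)
    · exact mem_chart_source ℝ _
    · rw [hzero, hzero]; exact mem_chart_source _ _
  have happ : ContMDiffAt (𝓡 d) 𝓘(ℝ, EuclideanSpace ℝ (Fin d)) (⊤ : ℕ∞)
      (fun x : E =>
        (inTangentCoordinates 𝓘(ℝ, ℝ) (𝓡 d) (fun _ : E => (0 : ℝ))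
          (fun v : E => h (0, v))
          (fun v : E => mfderiv 𝓘(ℝ, ℝ) (𝓡 d) (fun t : ℝ => h (t, v)) 0) v₀ x) (1 : ℝ)) v₀ := by
    exact ((ContinuousLinearMap.apply ℝ (EuclideanSpace ℝ (Fin d))
      (1 : ℝ)).contDiff.contMDiff.contMDiffAt).comp v₀ hmain
  exact happ.congr_of_eventuallyEq (Filter.Eventually.of_forall fun x => (key x).symm)


end GRaux

theorem regular_homogeneity_structure_is_vector_space
    {d : ℕ} {E : Type*} [TopologicalSpace E]
    [ChartedSpace (EuclideanSpace ℝ (Fin d)) E]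
    [IsManifold (𝓡 d) (⊤ : ℕ∞) E]
    [T2Space E] [SecondCountableTopology E] [Nonempty E]
    (h : ℝ × E → E)
    (hsmooth : ContMDiff (𝓘(ℝ, ℝ).prod (𝓡 d)) (𝓡 d) (⊤ : ℕ∞) h)
    (hone : ∀ v : E, h (1, v) = v)
    (hmul : ∀ (t s : ℝ) (v : E), h (t, h (s, v)) = h (t * s, v))
    (e₀ : E) (hzero : ∀ v : E, h (0, v) = e₀)
    (hreg : ∀ v : E,
      (mfderiv 𝓘(ℝ, ℝ) (𝓡 d) (fun t : ℝ => h (t, v)) 0) (1 : ℝ) = 0 ↔ v = e₀) :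
    ∃ (n : ℕ) (Φ : Diffeomorph (𝓡 d) (𝓡 n) E (EuclideanSpace ℝ (Fin n)) (⊤ : ℕ∞)),
      ∀ (t : ℝ) (v : E), Φ (h (t, v)) = t • Φ v := by
  classical
  set Φ : E → EuclideanSpace ℝ (Fin d) := GRphi d h with hΦdef
  have hΦsm : ContMDiff (𝓡 d) (𝓡 d) (⊤ : ℕ∞) Φ := GRphi_smooth d e₀ hsmooth hzero
  have hequiv : ∀ (s : ℝ) (v : E), Φ (h (s, v)) = s • Φ v := GRequivariant d hsmooth hmul
  have hreg' : ∀ v : E, Φ v = 0 ↔ v = e₀ := fun v => hreg v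
  have hΦe₀ : Φ e₀ = 0 := by
    have hconst : (fun t : ℝ => h (t, e₀)) = fun _ : ℝ => e₀ := by
      funext t
      have h1 := hmul t 0 e₀
      rw [hzero e₀] at h1
      rw [h1, mul_zero, hzero]
    show GRphi d h e₀ = 0
    unfold GRphi
    rw [hconst, mfderiv_const]
    rfl
  -- the derivative of Φ at e₀, as a continuous linear map on the model space
  set A : EuclideanSpace ℝ (Fin d) →L[ℝ] EuclideanSpace ℝ (Fin d) :=
    mfderiv (𝓡 d) (𝓡 d) Φ e₀ with hAdef
  have hsmul1 : ∀ w : EuclideanSpace ℝ (Fin d),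
      (mfderiv 𝓘(ℝ, ℝ) (𝓡 d) (fun s : ℝ => s • w) 0) (1 : ℝ) = w := by
    intro w
    have hdv : HasDerivAt (fun s : ℝ => s • w) w 0 := by
      simpa using (hasDerivAt_id (0 : ℝ)).smul_const w
    rw [mfderiv_eq_fderiv]
    show (fderiv ℝ (fun s : ℝ => s • w) 0) (1 : ℝ) = w
    rw [fderiv_apply_one_eq_deriv, hdv.deriv]
  have hAfix : ∀ v : E, A (Φ v) = Φ v := by
    intro v
    have hcomp : mfderiv 𝓘(ℝ, ℝ) (𝓡 d) (Φ ∘ fun s : ℝ => h (s, v)) 0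
        = (mfderiv (𝓡 d) (𝓡 d) Φ (h (0, v))).comp
            (mfderiv 𝓘(ℝ, ℝ) (𝓡 d) (fun s : ℝ => h (s, v)) 0) :=
      mfderiv_comp 0 (hΦsm.mdifferentiableAt (by simp))
        ((GRcurve_smooth d hsmooth v).mdifferentiableAt (by simp))
    rw [hzero v] at hcomp
    have hfun : mfderiv 𝓘(ℝ, ℝ) (𝓡 d) (Φ ∘ fun s : ℝ => h (s, v)) 0
        = mfderiv 𝓘(ℝ, ℝ) (𝓡 d) (fun s : ℝ => s • Φ v) 0 := by
      apply Filter.EventuallyEq.mfderiv_eq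
      exact Filter.Eventually.of_forall fun s => hequiv s v
    calc A (Φ v)
        = id (α := EuclideanSpace ℝ (Fin d)) ((mfderiv 𝓘(ℝ, ℝ) (𝓡 d) (Φ ∘ fun s : ℝ => h (s, v)) 0) (1 : ℝ)) := by
          rw [hcomp]; rfl
      _ = id (α := EuclideanSpace ℝ (Fin d)) ((mfderiv 𝓘(ℝ, ℝ) (𝓡 d) (fun s : ℝ => s • Φ v) 0) (1 : ℝ)) := by rw [hfun]; rfl
      _ = Φ v := hsmul1 (Φ v)
  -- chart around e₀
  set e := extChartAt (𝓡 d) e₀ with hedef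
  set y₀ := e e₀ with hy₀def
  set p : EuclideanSpace ℝ (Fin d) → EuclideanSpace ℝ (Fin d) := Φ ∘ e.symm with hpdef
  have hp_symm_sm : ContMDiffAt (𝓡 d) (𝓡 d) (⊤ : ℕ∞) e.symm y₀ := by
    have h1 := contMDiffOn_extChartAt_symm (I := 𝓡 d) (n := (⊤ : ℕ∞)) e₀
    exact (h1 y₀ (mem_extChartAt_target e₀)).contMDiffAt
      ((isOpen_extChartAt_target e₀).mem_nhds (mem_extChartAt_target e₀))
  have hpt : ContDiffAt ℝ (⊤ : ℕ∞) p y₀ := by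
    exact ((hΦsm (e.symm y₀)).comp y₀ hp_symm_sm).contDiffAt
  have hAp : A = fderiv ℝ p y₀ := by
    rw [hAdef, ((hΦsm e₀).mdifferentiableAt (by simp)).mfderiv]
    simp only [writtenInExtChartAt, extChartAt_model_space_eq_id, PartialEquiv.refl_coe,
      Function.comp_def, id_eq, ModelWithCorners.range_eq_univ, fderivWithin_univ]
    rfl
  have hApA : HasFDerivAt p A y₀ := by
    rw [hAp]; exact (hpt.differentiableAt (by simp)).hasFDerivAt
  have hAfixp : ∀ y, A (p y) = p y := fun y => hAfix _
  have hAA : A.comp A = A := by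
    have h2 : HasFDerivAt (fun y => A (p y)) (A.comp A) y₀ := A.hasFDerivAt.comp y₀ hApA
    have h3 : (fun y => A (p y)) = p := funext hAfixp
    rw [h3] at h2
    exact h2.unique hApA
  have hpy₀ : p y₀ = 0 := by
    show Φ (e.symm (e e₀)) = 0
    rw [PartialEquiv.left_inv e (mem_extChartAt_source e₀), hΦe₀]
  -- injectivity of A, from regularity
  have hAinj : ∀ w : EuclideanSpace ℝ (Fin d), A w = 0 → w = 0 := by
    intro w hw
    set G : EuclideanSpace ℝ (Fin d) → EuclideanSpace ℝ (Fin d) :=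
      fun y => p y + ((y - y₀) - A (y - y₀)) with hGdef
    have hGy₀ : G y₀ = 0 := by simp [hGdef, hpy₀]
    have hGsm : ContDiffAt ℝ (⊤ : ℕ∞) G y₀ := by
      apply hpt.add
      exact ((contDiff_id.sub contDiff_const).sub
        (A.contDiff.comp (contDiff_id.sub contDiff_const))).contDiffAt
    have hGder : HasFDerivAt G (ContinuousLinearMap.id ℝ (EuclideanSpace ℝ (Fin d))) y₀ := by
      have h2 : HasFDerivAt (fun y : EuclideanSpace ℝ (Fin d) => y - y₀)
          (ContinuousLinearMap.id ℝ (EuclideanSpace ℝ (Fin d))) y₀ :=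
        (hasFDerivAt_id y₀).sub_const y₀
      have h1 : HasFDerivAt (fun y : EuclideanSpace ℝ (Fin d) => (y - y₀) - A (y - y₀))
          ((ContinuousLinearMap.id ℝ (EuclideanSpace ℝ (Fin d))) - A.comp
            (ContinuousLinearMap.id ℝ (EuclideanSpace ℝ (Fin d)))) y₀ :=
        h2.sub (A.hasFDerivAt.comp y₀ h2)
      have h3 := hApA.add h1
      have h4 : A + ((ContinuousLinearMap.id ℝ (EuclideanSpace ℝ (Fin d))) - A.comp
            (ContinuousLinearMap.id ℝ (EuclideanSpace ℝ (Fin d))))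
          = ContinuousLinearMap.id ℝ (EuclideanSpace ℝ (Fin d)) := by
        ext x; simp
      rwa [h4] at h3
    have hGstrict : HasStrictFDerivAt G
        ((ContinuousLinearEquiv.refl ℝ (EuclideanSpace ℝ (Fin d)) :
          EuclideanSpace ℝ (Fin d) ≃L[ℝ] EuclideanSpace ℝ (Fin d)) :
          EuclideanSpace ℝ (Fin d) →L[ℝ] EuclideanSpace ℝ (Fin d)) y₀ := by
      apply hGsm.hasStrictFDerivAt' _ (by simp)
      simpa using hGder
    set ginv := hGstrict.localInverse G _ y₀ with hginvdef
    have hginv0 : ginv (G y₀) = y₀ := hGstrict.localInverse_apply_image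
    have hright : ∀ᶠ z in 𝓝 (G y₀), G (ginv z) = z := hGstrict.eventually_right_inverse
    have hcont : ContinuousAt ginv (G y₀) := hGstrict.localInverse_continuousAt
    have htarget : ∀ᶠ z in 𝓝 (G y₀), ginv z ∈ e.target := by
      apply hcont
      rw [hginv0]
      exact (isOpen_extChartAt_target e₀).mem_nhds (mem_extChartAt_target e₀)
    rw [hGy₀] at hright htarget
    have htw : Filter.Tendsto (fun t : ℝ => t • w) (𝓝 0) (𝓝 0) := by
      have := (continuous_id.smul (continuous_const (y := w))).tendsto (0 : ℝ)
      simpa using (show Filter.Tendsto (fun t : ℝ => t • w) (𝓝 0) (𝓝 ((0:ℝ) • w)) from this)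
    have hev : ∀ᶠ t : ℝ in 𝓝 0, G (ginv (t • w)) = t • w ∧ ginv (t • w) ∈ e.target :=
      htw.eventually (hright.and htarget)
    have hne : ∀ᶠ t : ℝ in 𝓝[≠] (0 : ℝ), t ≠ 0 := eventually_mem_nhdsWithin
    obtain ⟨t, ⟨hGt, hTt⟩, ht0'⟩ :=
      ((hev.filter_mono nhdsWithin_le_nhds).and hne).exists
    set y := ginv (t • w) with hydef
    have h6 : ∀ z, A (A z) = A z := by
      intro z
      have := congrArg (fun L : EuclideanSpace ℝ (Fin d) →L[ℝ] EuclideanSpace ℝ (Fin d) =>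
        L z) hAA
      simpa using this
    have h5 : A (G y) = p y := by
      simp only [hGdef, map_add, map_sub, h6, hAfixp y]
      abel
    rw [hGt] at h5
    have h7 : A (t • w) = 0 := by rw [map_smul, hw, smul_zero]
    rw [h7] at h5
    have hv : e.symm y = e₀ := (hreg' _).mp h5.symm
    have hy : y = y₀ := by
      have h8 := congrArg e hv
      rwa [PartialEquiv.right_inv e hTt] at h8
    have h9 : t • w = (0 : EuclideanSpace ℝ (Fin d)) := by rw [← hGt, hy, hGy₀]
    rcases smul_eq_zero.mp h9 with h | h
    · exact absurd h ht0'
    · exact h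
  have hAid : ∀ x, A x = x := by
    intro x
    have h2 : A (A x) = A x := by
      have := congrArg (fun L : EuclideanSpace ℝ (Fin d) →L[ℝ] EuclideanSpace ℝ (Fin d) =>
        L x) hAA
      simpa using this
    have h1 : A (x - A x) = 0 := by rw [map_sub, h2, sub_self]
    have h3 : x - A x = 0 := hAinj _ h1
    have := sub_eq_zero.mp h3
    rw [← this]
  -- A is the identity, so p has an invertible strict derivative at y₀
  have hAidmap : A = ContinuousLinearMap.id ℝ (EuclideanSpace ℝ (Fin d)) := by
    ext1 x; simpa using hAid x
  have hpFD : HasFDerivAt p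
      ((ContinuousLinearEquiv.refl ℝ (EuclideanSpace ℝ (Fin d)) :
        EuclideanSpace ℝ (Fin d) ≃L[ℝ] EuclideanSpace ℝ (Fin d)) :
        EuclideanSpace ℝ (Fin d) →L[ℝ] EuclideanSpace ℝ (Fin d)) y₀ := by
    have := hApA
    rw [hAidmap] at this
    simpa using this
  have hple : ((⊤ : ℕ∞) : WithTop ℕ∞) ≠ 0 := by simp
  have hpid : HasStrictFDerivAt p
      ((ContinuousLinearEquiv.refl ℝ (EuclideanSpace ℝ (Fin d)) :
        EuclideanSpace ℝ (Fin d) ≃L[ℝ] EuclideanSpace ℝ (Fin d)) :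
        EuclideanSpace ℝ (Fin d) →L[ℝ] EuclideanSpace ℝ (Fin d)) y₀ :=
    hpt.hasStrictFDerivAt' hpFD hple
  set σ : EuclideanSpace ℝ (Fin d) → EuclideanSpace ℝ (Fin d) :=
    hpt.localInverse hpFD hple with hσdef
  have hσ0 : σ (p y₀) = y₀ := hpt.localInverse_apply_image hpFD hple
  have hσsm0 : ContDiffAt ℝ (⊤ : ℕ∞) σ (p y₀) := hpt.to_localInverse hpFD hple
  have hσstrict : σ = hpid.localInverse p _ y₀ := rfl
  have hσcont : ContinuousAt σ (p y₀) := by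
    rw [hσstrict]; exact hpid.localInverse_continuousAt
  have hleft : ∀ᶠ y in 𝓝 y₀, σ (p y) = y := by
    rw [hσstrict]; exact hpid.eventually_left_inverse
  have hright : ∀ᶠ z in 𝓝 (p y₀), p (σ z) = z := by
    rw [hσstrict]; exact hpid.eventually_right_inverse
  have hσtarget : ∀ᶠ z in 𝓝 (p y₀), σ z ∈ e.target := by
    apply hσcont
    rw [hσ0]
    exact (isOpen_extChartAt_target e₀).mem_nhds (mem_extChartAt_target e₀)
  rw [hpy₀] at hright hσtarget hσsm0
  -- an open set around e₀ on which Φ is injective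
  obtain ⟨T, hTsub, hTopen, hTy₀⟩ : ∃ T : Set (EuclideanSpace ℝ (Fin d)),
      (∀ y ∈ T, σ (p y) = y) ∧ IsOpen T ∧ y₀ ∈ T := by
    rcases eventually_nhds_iff.mp hleft with ⟨T, h1, h2, h3⟩
    exact ⟨T, h1, h2, h3⟩
  set U : Set E := e.source ∩ e ⁻¹' T with hUdef
  have hUopen : IsOpen U :=
    (continuousOn_extChartAt e₀).isOpen_inter_preimage (isOpen_extChartAt_source e₀) hTopen
  have hUe₀ : e₀ ∈ U := ⟨mem_extChartAt_source e₀, hTy₀⟩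
  have hΦU : ∀ u ∈ U, σ (Φ u) = e u := by
    intro u hu
    have h1 : p (e u) = Φ u := by
      show Φ (e.symm (e u)) = Φ u
      rw [e.left_inv hu.1]
    rw [← h1]
    exact hTsub _ hu.2
  have hUinj : ∀ u₁ ∈ U, ∀ u₂ ∈ U, Φ u₁ = Φ u₂ → u₁ = u₂ := by
    intro u₁ h1 u₂ h2 heq
    exact e.injOn h1.1 h2.1 (by rw [← hΦU u₁ h1, ← hΦU u₂ h2, heq])
  have htend : ∀ v : E, Filter.Tendsto (fun t : ℝ => h (t, v)) (𝓝 0) (𝓝 e₀) := by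
    intro v
    have hcont : Continuous fun t : ℝ => h (t, v) :=
      hsmooth.continuous.comp (continuous_id.prodMk continuous_const)
    have := hcont.tendsto 0
    rwa [hzero v] at this
  have hne0 : ∀ᶠ t : ℝ in 𝓝[≠] (0 : ℝ), t ≠ 0 := eventually_mem_nhdsWithin
  have hΦinj : Function.Injective Φ := by
    intro v w hvw
    have hev : ∀ᶠ t : ℝ in 𝓝 0, h (t, v) ∈ U ∧ h (t, w) ∈ U :=
      ((htend v).eventually (hUopen.mem_nhds hUe₀)).and
        ((htend w).eventually (hUopen.mem_nhds hUe₀))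
    obtain ⟨t, ⟨h1, h2⟩, ht0⟩ := ((hev.filter_mono nhdsWithin_le_nhds).and hne0).exists
    have h3 : Φ (h (t, v)) = Φ (h (t, w)) := by rw [hequiv, hequiv, hvw]
    have h4 : h (t, v) = h (t, w) := hUinj _ h1 _ h2 h3
    have h5 : v = h (t⁻¹, h (t, v)) := by rw [hmul, inv_mul_cancel₀ ht0, hone]
    rw [h5, h4, hmul, inv_mul_cancel₀ ht0, hone]
  have hΦsurj : Function.Surjective Φ := by
    intro x
    have hev : ∀ᶠ z in 𝓝 (0 : EuclideanSpace ℝ (Fin d)), p (σ z) = z ∧ σ z ∈ e.target :=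
      hright.and hσtarget
    have htx : Filter.Tendsto (fun t : ℝ => t • x) (𝓝 0) (𝓝 0) := by
      have := (continuous_id.smul (continuous_const (y := x))).tendsto (0 : ℝ)
      simpa using (show Filter.Tendsto (fun t : ℝ => t • x) (𝓝 0) (𝓝 ((0:ℝ) • x)) from this)
    obtain ⟨t, ⟨h1, h2⟩, ht0⟩ :=
      (((htx.eventually hev).filter_mono nhdsWithin_le_nhds).and hne0).exists
    refine ⟨h (t⁻¹, e.symm (σ (t • x))), ?_⟩
    rw [hequiv]
    have h3 : Φ (e.symm (σ (t • x))) = t • x := h1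
    rw [h3, smul_smul, inv_mul_cancel₀ ht0, one_smul]
  set Φeq := Equiv.ofBijective Φ ⟨hΦinj, hΦsurj⟩ with hΦeqdef
  have hSΦ : ∀ x, Φ (Φeq.symm x) = x := fun x => Φeq.apply_symm_apply x
  have hSsm : ContMDiff (𝓡 d) (𝓡 d) (⊤ : ℕ∞) Φeq.symm := by
    intro x₀
    rw [contMDiffAt_infty]
    intro n
    obtain ⟨W, hW0, hσW⟩ := hσsm0.contDiffOn (m := n) (by exact_mod_cast le_top) (by simp)
    set N : Set (EuclideanSpace ℝ (Fin d)) :=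
      W ∩ {z | p (σ z) = z ∧ σ z ∈ e.target} with hNdef
    have hN : N ∈ 𝓝 (0 : EuclideanSpace ℝ (Fin d)) :=
      Filter.inter_mem hW0 (hright.and hσtarget)
    have hNint : interior N ∈ 𝓝 (0 : EuclideanSpace ℝ (Fin d)) := interior_mem_nhds.mpr hN
    have htx : Filter.Tendsto (fun t : ℝ => t • x₀) (𝓝 0) (𝓝 0) := by
      have := (continuous_id.smul (continuous_const (y := x₀))).tendsto (0 : ℝ)
      simpa using (show Filter.Tendsto (fun t : ℝ => t • x₀) (𝓝 0) (𝓝 ((0:ℝ) • x₀)) from this)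
    obtain ⟨t, htN, ht0⟩ :=
      (((htx.eventually hNint).filter_mono nhdsWithin_le_nhds).and hne0).exists
    set gl : EuclideanSpace ℝ (Fin d) → E := fun x => h (t⁻¹, e.symm (σ (t • x))) with hgldef
    have hmemN : t • x₀ ∈ N := interior_subset htN
    have hσtx : σ (t • x₀) ∈ e.target := hmemN.2.2
    have hglsm : ContMDiffAt (𝓡 d) (𝓡 d) n gl x₀ := by
      have hsmulc : ContMDiffAt (𝓡 d) (𝓡 d) n (fun x : EuclideanSpace ℝ (Fin d) => t • x) x₀ :=
        ((contDiff_id.const_smul t).of_le le_top).contMDiff.contMDiffAt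
      have hσat : ContMDiffAt (𝓡 d) (𝓡 d) n σ (t • x₀) := by
        have hsub : interior N ⊆ W := subset_trans interior_subset Set.inter_subset_left
        exact ((hσW.mono hsub).contDiffAt (isOpen_interior.mem_nhds htN)).contMDiffAt
      have hesymm : ContMDiffAt (𝓡 d) (𝓡 d) n e.symm (σ (t • x₀)) :=
        (contMDiffOn_extChartAt_symm e₀ _ hσtx).contMDiffAt
          ((isOpen_extChartAt_target e₀).mem_nhds hσtx)
      have hh : ContMDiffAt (𝓡 d) (𝓡 d) n (fun u : E => h (t⁻¹, u)) (e.symm (σ (t • x₀))) :=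
        ((hsmooth.comp (contMDiff_const.prodMk contMDiff_id)).of_le (by exact_mod_cast le_top)).contMDiffAt
      have := hh.comp x₀ (show ContMDiffAt (𝓡 d) (𝓡 d) n (fun x => e.symm (σ (t • x))) x₀ from hesymm.comp x₀ (hσat.comp x₀ hsmulc))
      exact this
    have hglΦ : ∀ x, t • x ∈ N → Φ (gl x) = x := by
      intro x hx
      show Φ (h (t⁻¹, e.symm (σ (t • x)))) = x
      rw [hequiv]
      have h3 : Φ (e.symm (σ (t • x))) = t • x := hx.2.1
      rw [h3, smul_smul, inv_mul_cancel₀ ht0, one_smul]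
    have hglS : Φeq.symm =ᶠ[𝓝 x₀] gl := by
      have hevx : ∀ᶠ x in 𝓝 x₀, t • x ∈ interior N := by
        have hc : Continuous fun x : EuclideanSpace ℝ (Fin d) => t • x :=
          continuous_id.const_smul t
        exact hc.continuousAt.preimage_mem_nhds (isOpen_interior.mem_nhds htN)
      filter_upwards [hevx] with x hx
      apply hΦinj
      rw [hSΦ, hglΦ x (interior_subset hx)]
    exact hglsm.congr_of_eventuallyEq hglS
  refine ⟨d, ⟨Φeq, hΦsm, hSsm⟩, fun t v => hequiv t v⟩
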